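/- For all integers q ≥ 2 and d ≥ 1, every x ∈ [0,1], and every x̂ ∈ (0,1), the partial derivative of δ_{q,d}(x, x̂) with respect to x̂ exists and satisfies ∂δ_{q,d}(x,x̂)/∂x̂ = d·(x̂−x)/(x̂(1−x̂)) + ρ_{q,d}'(x̂) = −q·d·( ζ_{q,d}(ẑ) − z ) / ( (1−ẑ)·(1+(q−1)ẑ) ), where z := 1 − qx/(q−1) and ẑ := 1 − qx̂/(q−1). -/

import Mathlib

open Real Set Filter Polynomial
open scoped Classical

/-- The entropy function `H_q`. -/
noncomputable def Hent (q : ℕ) (x : ℝ) : ℝ :=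
  x * Real.log (1 / x) + (1 - x) * Real.log (1 / (1 - x)) + x * Real.log ((q : ℝ) - 1)

/-- The information divergence function `D(x‖y)`. -/
noncomputable def Dkl (x y : ℝ) : ℝ :=
  x * Real.log (x / y) + (1 - x) * Real.log ((1 - x) / (1 - y))

/-- The function `ρ_{q,d}`. -/
noncomputable def rhoF (q d : ℕ) (x : ℝ) : ℝ :=
  Real.log (1 + ((q : ℝ) - 1) * (1 - (q : ℝ) * x / ((q : ℝ) - 1)) ^ d)

/-- The function `δ_{q,d}(x, x̂)`. -/
noncomputable def deltaTwo (q d : ℕ) (x xh : ℝ) : ℝ :=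
  (d : ℝ) * Dkl x xh + rhoF q d xh

/-- The function `δ_{q,d}(x) = inf_{x̂ ∈ (0,1)} δ_{q,d}(x, x̂)`. -/
noncomputable def deltaMin (q d : ℕ) (x : ℝ) : ℝ :=
  sInf ((fun xh => deltaTwo q d x xh) '' Set.Ioo 0 1)

/-- The asymptotic growth rate `ω_{q,c,d}`. -/
noncomputable def omegaF (q c d : ℕ) (x : ℝ) : ℝ :=
  Hent q x + ((c : ℝ) / (d : ℝ)) * (deltaMin q d x - Real.log (q : ℝ))

/-- The function `ζ_{q,d}`, extended by continuity at `ẑ = -1` when `q = 2` and `d` is odd. -/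
noncomputable def zetaF (q d : ℕ) (z : ℝ) : ℝ :=
  if q = 2 ∧ Odd d ∧ z = -1 then 2 / (d : ℝ) - 1
  else (z + z ^ (d - 1) + ((q : ℝ) - 2) * z ^ d) / (1 + ((q : ℝ) - 1) * z ^ d)


set_option maxHeartbeats 2000000 in
private lemma algId_aux (D Q x z w : ℝ) (hQ0 : Q ≠ 0) (hQ1 : Q - 1 ≠ 0)
    (hz1 : 1 - z ≠ 0) (hz2 : 1 + (Q - 1) * z ≠ 0)
    (hA : 1 + (Q - 1) * (w * z) ≠ 0) :
    D * ((Q - 1) * (1 - z) / Q - x) / ((Q - 1) * (1 - z) / Q * (1 - (Q - 1) * (1 - z) / Q)) +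
      (Q - 1) * (D * w * -(Q / (Q - 1))) / (1 + (Q - 1) * (w * z)) =
    -(Q * D * ((z + w + (Q - 2) * (w * z)) / (1 + (Q - 1) * (w * z)) - (1 - Q * x / (Q - 1)))) /
      ((1 - z) * (1 + (Q - 1) * z)) := by
  have hrw : 1 - (Q - 1) * (1 - z) / Q = (1 + (Q - 1) * z) / Q := by field_simp; ring
  rw [hrw]
  have hA' : 1 + (Q - 1) * z * w ≠ 0 := by rwa [mul_assoc, mul_comm z]
  field_simp
  ring

/-- For `q ≥ 2`, `d ≥ 1`, `x ∈ [0,1]` and `x̂ ∈ (0,1)`, the partial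
derivative of `δ_{q,d}(x,·)` at `x̂` exists and equals
`d·(x̂−x)/(x̂(1−x̂)) + ρ_{q,d}'(x̂) = −qd·(ζ_{q,d}(ẑ)−z)/((1−ẑ)(1+(q−1)ẑ))`
where `z = 1 − qx/(q−1)` and `ẑ = 1 − qx̂/(q−1)`. -/
theorem deltaTwo_hasDerivAt (q d : ℕ) (hq : 2 ≤ q) (hd : 1 ≤ d) (x xh : ℝ)
    (hx : x ∈ Set.Icc (0 : ℝ) 1) (hxh : xh ∈ Set.Ioo (0 : ℝ) 1) :
    ∃ r : ℝ, HasDerivAt (rhoF q d) r xh ∧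
      HasDerivAt (fun y => deltaTwo q d x y) ((d : ℝ) * (xh - x) / (xh * (1 - xh)) + r) xh ∧
      (d : ℝ) * (xh - x) / (xh * (1 - xh)) + r =
        -((q : ℝ) * (d : ℝ) *
            (zetaF q d (1 - (q : ℝ) * xh / ((q : ℝ) - 1)) - (1 - (q : ℝ) * x / ((q : ℝ) - 1)))) /
          ((1 - (1 - (q : ℝ) * xh / ((q : ℝ) - 1))) *
            (1 + ((q : ℝ) - 1) * (1 - (q : ℝ) * xh / ((q : ℝ) - 1)))) := by
  obtain ⟨hxh0, hxh1⟩ := hxh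
  obtain ⟨hx0, hx1⟩ := hx
  have hxh0' : xh ≠ 0 := ne_of_gt hxh0
  have hxh1' : (1:ℝ) - xh ≠ 0 := by linarith
  have hQ2 : (2:ℝ) ≤ (q:ℝ) := by exact_mod_cast hq
  set Q := (q:ℝ) with hQdef
  have hQ0 : Q ≠ 0 := by intro h; rw [h] at hQ2; linarith
  have hQ1 : (0:ℝ) < Q - 1 := by linarith
  set zh := 1 - Q * xh / (Q - 1) with hzh
  have hkey1 : (Q - 1) * (1 - zh) = Q * xh := by rw [hzh]; field_simp; ring
  have hkey2 : 1 + (Q - 1) * zh = Q * (1 - xh) := by rw [hzh]; field_simp; ring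
  have hzh1 : zh < 1 := by nlinarith
  have hzhg : -1 < (Q - 1) * zh := by nlinarith
  have hA : 0 < 1 + (Q - 1) * zh ^ d := by
    rcases le_or_gt 0 zh with h | h
    · have := pow_nonneg h d
      nlinarith
    · have hz1 : -zh ≤ 1 := by nlinarith
      have h2 : (-zh) ^ d ≤ (-zh) ^ 1 := pow_le_pow_of_le_one (by linarith) hz1 hd
      have h4 := neg_abs_le (zh ^ d)
      rw [abs_pow, abs_of_neg h] at h4
      nlinarith
  -- derivative of rhoF
  have hlin : HasDerivAt (fun y : ℝ => 1 - Q * y / (Q - 1)) (-(Q / (Q - 1))) xh := by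
    have h1 := ((hasDerivAt_id xh).const_mul Q).div_const (Q - 1)
    have h2 := h1.const_sub 1
    refine h2.congr_deriv ?_
    ring
  have hu := ((hlin.pow d).const_mul (Q - 1)).const_add 1
  have hrho : HasDerivAt (rhoF q d)
      ((Q - 1) * ((d:ℝ) * zh ^ (d - 1) * -(Q / (Q - 1))) / (1 + (Q - 1) * zh ^ d)) xh :=
    hu.log (ne_of_gt hA)
  -- derivative of the two Dkl terms
  have hlog1 : HasDerivAt (fun y : ℝ => x * Real.log (x / y)) (x * -xh⁻¹) xh := by
    rcases eq_or_lt_of_le hx0 with h | h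
    · simp only [← h, zero_mul, zero_div]
      simpa using hasDerivAt_const xh (0:ℝ)
    · have h1 := ((Real.hasDerivAt_log (ne_of_gt hxh0)).const_sub (Real.log x)).const_mul x
      apply h1.congr_of_eventuallyEq
      filter_upwards [eventually_gt_nhds hxh0] with y hy
      rw [Real.log_div (ne_of_gt h) (ne_of_gt hy)]
  have hlog2 : HasDerivAt (fun y : ℝ => (1 - x) * Real.log ((1 - x) / (1 - y)))
      ((1 - x) * (1 - xh)⁻¹) xh := by
    rcases eq_or_lt_of_le hx1 with h | h
    · simp only [h, sub_self, zero_mul]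
      simpa using hasDerivAt_const xh (0:ℝ)
    · have hb : HasDerivAt (fun y : ℝ => 1 - y) (-1) xh := by
        simpa using (hasDerivAt_id xh).const_sub 1
      have h1 := ((hb.log (by linarith : (1:ℝ) - xh ≠ 0)).const_sub
        (Real.log (1 - x))).const_mul (1 - x)
      have h1' : HasDerivAt (fun y : ℝ => (1 - x) * (Real.log (1 - x) - Real.log (1 - y)))
          ((1 - x) * (1 - xh)⁻¹) xh := by
        refine h1.congr_deriv ?_
        field_simp
      apply h1'.congr_of_eventuallyEq
      filter_upwards [eventually_lt_nhds hxh1] with y hy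
      rw [Real.log_div (by linarith : (1:ℝ) - x ≠ 0) (by linarith : (1:ℝ) - y ≠ 0)]
  have hDkl : HasDerivAt (fun y => Dkl x y) (x * -xh⁻¹ + (1 - x) * (1 - xh)⁻¹) xh :=
    hlog1.add hlog2
  refine ⟨(Q - 1) * ((d:ℝ) * zh ^ (d - 1) * -(Q / (Q - 1))) / (1 + (Q - 1) * zh ^ d),
    hrho, ?_, ?_⟩
  · have hcomb := (hDkl.const_mul (d:ℝ)).add hrho
    have hcoef : (d:ℝ) * (x * -xh⁻¹ + (1 - x) * (1 - xh)⁻¹) =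
        (d:ℝ) * (xh - x) / (xh * (1 - xh)) := by
      rw [eq_div_iff (mul_ne_zero hxh0' hxh1')]
      field_simp
      ring
    rw [hcoef] at hcomb
    exact hcomb
  · -- the algebraic identity
    have hzne : ¬(q = 2 ∧ Odd d ∧ zh = -1) := by
      rintro ⟨-, -, h⟩
      nlinarith [hzhg, h]
    rw [zetaF, if_neg hzne]
    have hxheq : xh = (Q - 1) * (1 - zh) / Q := by
      field_simp
      linarith [hkey1]
    have h1zh : 1 - zh ≠ 0 := by
      intro h
      rw [h, mul_zero] at hkey1
      exact absurd hkey1.symm (mul_ne_zero hQ0 hxh0')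
    have h2zh : 1 + (Q - 1) * zh ≠ 0 := by
      rw [hkey2]; positivity
    have hzd : zh ^ d = zh ^ (d - 1) * zh := by
      conv_lhs => rw [show d = (d - 1) + 1 by omega]
      rw [pow_succ]
    rw [hzd]
    have hAne : 1 + (Q - 1) * (zh ^ (d - 1) * zh) ≠ 0 := by
      rw [← hzd]; exact ne_of_gt hA
    calc (d:ℝ) * (xh - x) / (xh * (1 - xh)) +
          (Q - 1) * ((d:ℝ) * zh ^ (d - 1) * -(Q / (Q - 1))) / (1 + (Q - 1) * (zh ^ (d - 1) * zh))
        = (d:ℝ) * ((Q - 1) * (1 - zh) / Q - x) /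
            ((Q - 1) * (1 - zh) / Q * (1 - (Q - 1) * (1 - zh) / Q)) +
          (Q - 1) * ((d:ℝ) * zh ^ (d - 1) * -(Q / (Q - 1))) /
            (1 + (Q - 1) * (zh ^ (d - 1) * zh)) := by rw [← hxheq]
      _ = -(Q * (d:ℝ) *
            ((zh + zh ^ (d - 1) + (Q - 2) * (zh ^ (d - 1) * zh)) /
              (1 + (Q - 1) * (zh ^ (d - 1) * zh)) - (1 - Q * x / (Q - 1)))) /
            ((1 - zh) * (1 + (Q - 1) * zh)) :=
        algId_aux (d:ℝ) Q x zh (zh ^ (d - 1)) hQ0 (ne_of_gt hQ1) h1zh h2zh hAne
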